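/- Commutator kernel estimate: with T a δ-Calderón–Zygmund operator, b ∈ BMO^d with exponent μ_b, and (a, Q) an atom with ∫ a = 0, ‖a‖_∞ ≤ |Q|^{−1/α}, for x ∉ 2√d·Q one has |[b,T](a)(x)| ≤ C · ( (𝔐 χ_Q(x))^{(d+δ−μ_b)/d} + ‖b‖_{BMO} (𝔐 χ_Q(x))^{(d+δ)/d} ) / ‖χ_Q‖_{L^α}. -/

import Mathlib

open MeasureTheory ENNReal

noncomputable section

/-- The axis-parallel cube in `ℝ^d` with center `xQ` and side-length `ℓ`. -/
def cube (d : ℕ) (xQ : Fin d → ℝ) (ℓ : ℝ) : Set (Fin d → ℝ) :=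
  {y | ‖y - xQ‖ ≤ ℓ / 2}

/-- The average of `b` over the cube `Q(xQ, ℓ)`. -/
def cubeAvg (d : ℕ) (b : (Fin d → ℝ) → ℝ) (xQ : Fin d → ℝ) (ℓ : ℝ) : ℝ :=
  ⨍ y in cube d xQ ℓ, b y

/-- The Hardy–Littlewood maximal function. -/
def HLMax (d : ℕ) (f : (Fin d → ℝ) → ℝ) (x : Fin d → ℝ) : ℝ≥0∞ :=
  ⨆ r > (0 : ℝ), (volume (Metric.ball x r))⁻¹ *
    ∫⁻ y in Metric.ball x r, ENNReal.ofReal |f y|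

lemma cube_eq (d : ℕ) (xQ : Fin d → ℝ) (ℓ : ℝ) :
    cube d xQ ℓ = Metric.closedBall xQ (ℓ / 2) := by
  ext y; simp [cube, Metric.mem_closedBall, dist_eq_norm]

lemma measurableSet_cube (d : ℕ) (xQ : Fin d → ℝ) (ℓ : ℝ) :
    MeasurableSet (cube d xQ ℓ) := by
  rw [cube_eq]; exact measurableSet_closedBall

lemma volume_cube (d : ℕ) (xQ : Fin d → ℝ) {ℓ : ℝ} (hℓ : 0 ≤ ℓ) :
    volume (cube d xQ ℓ) = ENNReal.ofReal (ℓ ^ (d : ℝ)) := by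
  rw [cube_eq, Real.volume_pi_closedBall xQ (by linarith), Fintype.card_fin]
  congr 1
  rw [show 2 * (ℓ / 2) = ℓ by ring, Real.rpow_natCast]

lemma mem_cube {d : ℕ} {xQ y : Fin d → ℝ} {ℓ : ℝ} :
    y ∈ cube d xQ ℓ ↔ ‖y - xQ‖ ≤ ℓ / 2 := Iff.rfl

lemma kernel_bound (d : ℕ) (hd : 0 < d) (δ : ℝ) (hδ : 0 < δ)
    (K : (Fin d → ℝ) → (Fin d → ℝ) → ℝ) (A : ℝ) (hA : 0 < A)
    (hK : ∀ x y z, y ≠ x → 2 * ‖y - z‖ ≤ ‖x - y‖ →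
      |K x y - K x z| ≤ A * ‖y - z‖ ^ δ / ‖x - y‖ ^ ((d : ℝ) + δ))
    (xQ : Fin d → ℝ) (ℓ : ℝ) (hℓ : 0 < ℓ)
    (x : Fin d → ℝ) (hx : x ∉ cube d xQ (2 * Real.sqrt d * ℓ))
    (y : Fin d → ℝ) (hy : y ∈ cube d xQ ℓ) :
    |K x y - K x xQ| ≤
      2 * 3 ^ ((d : ℝ) + δ) * A * ℓ ^ δ / ‖x - xQ‖ ^ ((d : ℝ) + δ) := by
  have h1d : (1 : ℝ) ≤ Real.sqrt d := by
    rw [show (1:ℝ) = Real.sqrt 1 by simp]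
    exact Real.sqrt_le_sqrt (by exact_mod_cast hd)
  rw [mem_cube, not_le] at hx
  have hR : Real.sqrt d * ℓ < ‖x - xQ‖ := by
    calc Real.sqrt d * ℓ = 2 * Real.sqrt d * ℓ / 2 := by ring
    _ < ‖x - xQ‖ := hx
  set R := ‖x - xQ‖ with hRdef
  have hlR : ℓ < R := lt_of_le_of_lt (by nlinarith) hR
  have hR0 : (0 : ℝ) < R := lt_trans hℓ hlR
  have hy' : ‖y - xQ‖ ≤ ℓ / 2 := hy
  have hde : (0 : ℝ) < (d : ℝ) + δ := by positivity
  -- master helper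
  have helper : ∀ c s n : ℝ, 0 < c → 0 ≤ s → s ≤ ℓ / 2 → R / c < n →
      A * s ^ δ / n ^ ((d : ℝ) + δ) ≤ c ^ ((d : ℝ) + δ) * A * ℓ ^ δ / R ^ ((d : ℝ) + δ) := by
    intro c s n hc hs hsl hn
    have hn0 : (0 : ℝ) < n := lt_of_le_of_lt (by positivity) hn
    have step1 : A * s ^ δ / n ^ ((d : ℝ) + δ) ≤ A * ℓ ^ δ / (R / c) ^ ((d : ℝ) + δ) := by
      apply div_le_div₀ (by positivity)
      · have : s ^ δ ≤ ℓ ^ δ :=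
          Real.rpow_le_rpow hs (by linarith) hδ.le
        nlinarith [Real.rpow_nonneg hs δ]
      · positivity
      · exact Real.rpow_le_rpow (by positivity) hn.le hde.le
    refine step1.trans (le_of_eq ?_)
    rw [Real.div_rpow hR0.le hc.le, div_div_eq_mul_div]
    ring
  -- common facts
  have hxy_lb : R - ℓ / 2 ≤ ‖x - y‖ := by
    have : R ≤ ‖x - y‖ + ‖y - xQ‖ := by
      calc R = ‖(x - y) + (y - xQ)‖ := by rw [sub_add_sub_cancel]
      _ ≤ ‖x - y‖ + ‖y - xQ‖ := norm_add_le _ _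
    linarith
  have hyx : y ≠ x := by
    intro h
    rw [h] at hy'
    have : R ≤ ℓ / 2 := hy'
    linarith
  by_cases hcase : 2 * ‖y - xQ‖ ≤ ‖x - y‖
  · -- far case: direct application
    have h := hK x y xQ hyx hcase
    have hn : R / 2 < ‖x - y‖ := by linarith
    have := helper 2 ‖y - xQ‖ ‖x - y‖ two_pos (norm_nonneg _) hy' hn
    have h23 : (2:ℝ) ^ ((d : ℝ) + δ) ≤ 3 ^ ((d : ℝ) + δ) :=
      Real.rpow_le_rpow (by norm_num) (by norm_num) hde.le
    have h3pos : (0:ℝ) < 3 ^ ((d : ℝ) + δ) := by positivity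
    calc |K x y - K x xQ| ≤ A * ‖y - xQ‖ ^ δ / ‖x - y‖ ^ ((d : ℝ) + δ) := h
    _ ≤ 2 ^ ((d : ℝ) + δ) * A * ℓ ^ δ / R ^ ((d : ℝ) + δ) := this
    _ ≤ 2 * 3 ^ ((d : ℝ) + δ) * A * ℓ ^ δ / R ^ ((d : ℝ) + δ) := by
        gcongr
        nlinarith
  · -- near case: R < 3ℓ/2, chain through midpoint
    push_neg at hcase
    have hxyl : ‖x - y‖ < ℓ := by linarith
    have hR32 : R < 3 * ℓ / 2 := by linarith
    set m := xQ + (1/2 : ℝ) • (y - xQ) with hm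
    have hmxQ : m - xQ = (1/2 : ℝ) • (y - xQ) := by rw [hm]; abel
    have hym : y - m = (1/2 : ℝ) • (y - xQ) := by
      rw [hm]; ext i; simp [Pi.smul_apply, smul_eq_mul]; ring
    have hnm : ‖m - xQ‖ = ‖y - xQ‖ / 2 := by
      rw [hmxQ, norm_smul]; simp [Real.norm_eq_abs]; ring
    have hnym : ‖y - m‖ = ‖y - xQ‖ / 2 := by
      rw [hym, norm_smul]; simp [Real.norm_eq_abs]; ring
    have htri : R ≤ ‖x - m‖ + ‖m - xQ‖ := by
      calc R = ‖(x - m) + (m - xQ)‖ := by rw [sub_add_sub_cancel]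
      _ ≤ ‖x - m‖ + ‖m - xQ‖ := norm_add_le _ _
    have hm4 : ‖m - xQ‖ ≤ ℓ / 4 := by rw [hnm]; linarith
    have hym4 : ‖y - m‖ ≤ ℓ / 4 := by rw [hnym]; linarith
    have hxm_lb : R - ℓ / 4 ≤ ‖x - m‖ := by linarith
    have hxm_half : ℓ / 2 < ‖x - m‖ := by linarith
    have hxy_half : ℓ / 2 < ‖x - y‖ := by linarith
    have hmx : m ≠ x := by
      intro h
      rw [h] at hm4
      have : R ≤ ℓ / 4 := by
        have : ‖x - xQ‖ = ‖m - xQ‖ := by rw [h]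
        linarith [this ▸ hm4]
      linarith
    have hK1 := hK x y m hyx (by linarith)
    have hK2 := hK x m xQ hmx (by linarith)
    have hb1 := helper 3 ‖y - m‖ ‖x - y‖ (by norm_num) (norm_nonneg _)
      (by linarith) (by linarith)
    have hb2 := helper 3 ‖m - xQ‖ ‖x - m‖ (by norm_num) (norm_nonneg _)
      (by linarith) (by linarith)
    calc |K x y - K x xQ| = |(K x y - K x m) + (K x m - K x xQ)| := by ring_nf
    _ ≤ |K x y - K x m| + |K x m - K x xQ| := abs_add_le _ _
    _ ≤ 3 ^ ((d : ℝ) + δ) * A * ℓ ^ δ / R ^ ((d : ℝ) + δ)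
        + 3 ^ ((d : ℝ) + δ) * A * ℓ ^ δ / R ^ ((d : ℝ) + δ) := by
        gcongr <;> [exact hK1.trans hb1; exact hK2.trans hb2]
    _ = 2 * 3 ^ ((d : ℝ) + δ) * A * ℓ ^ δ / R ^ ((d : ℝ) + δ) := by ring

lemma b_bounded (d : ℕ) (hd : 0 < d) (b : (Fin d → ℝ) → ℝ)
    (μ : ℝ) (hμ0 : 0 < μ) (Cb : ℝ) (hCb : 0 < Cb)
    (hBMOd : ∀ (xQ : Fin d → ℝ) (ℓ : ℝ) (x : Fin d → ℝ), 0 < ℓ → x ∉ cube d xQ ℓ →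
      |b x - cubeAvg d b xQ ℓ| ≤ Cb * (ℓ⁻¹ * ‖x - xQ‖) ^ μ)
    (xQ : Fin d → ℝ) (ℓ : ℝ) (hℓ : 0 < ℓ) :
    ∃ B : ℝ, ∀ y ∈ cube d xQ ℓ, |b y| ≤ B := by
  haveI : Nonempty (Fin d) := Fin.pos_iff_nonempty.mp hd
  set z₂ : Fin d → ℝ := xQ + (fun _ => ℓ) with hz2
  have hz2n : ‖z₂ - xQ‖ = ℓ := by
    rw [hz2, add_sub_cancel_left, pi_norm_const ℓ, Real.norm_eq_abs, abs_of_pos hℓ]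
  refine ⟨max |cubeAvg d b xQ (ℓ/2)| |cubeAvg d b z₂ (ℓ/2)| + Cb * 3 ^ μ, ?_⟩
  intro y hy
  have hy' : ‖y - xQ‖ ≤ ℓ / 2 := hy
  have h3 : ∀ z : Fin d → ℝ, ‖y - z‖ ≤ 3 * ℓ / 2 →
      Cb * ((ℓ/2)⁻¹ * ‖y - z‖) ^ μ ≤ Cb * 3 ^ μ := by
    intro z hz
    have harg : (ℓ/2)⁻¹ * ‖y - z‖ ≤ 3 := by
      rw [inv_mul_le_iff₀ (by positivity)]
      linarith
    exact mul_le_mul_of_nonneg_left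
      (Real.rpow_le_rpow (by positivity) harg hμ0.le) hCb.le
  by_cases hc : y ∈ cube d xQ (ℓ/2)
  · have hout : y ∉ cube d z₂ (ℓ/2) := by
      rw [mem_cube, not_le]
      have : ℓ ≤ ‖y - z₂‖ + ‖y - xQ‖ := by
        calc ℓ = ‖z₂ - xQ‖ := hz2n.symm
        _ = ‖(z₂ - y) + (y - xQ)‖ := by rw [sub_add_sub_cancel]
        _ ≤ ‖z₂ - y‖ + ‖y - xQ‖ := norm_add_le _ _
        _ = ‖y - z₂‖ + ‖y - xQ‖ := by rw [norm_sub_rev]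
      have hc' : ‖y - xQ‖ ≤ ℓ / 4 := by
        have := (mem_cube.mp hc); linarith
      linarith
    have h1 := hBMOd z₂ (ℓ/2) y (by positivity) hout
    have h2 : ‖y - z₂‖ ≤ 3 * ℓ / 2 := by
      calc ‖y - z₂‖ = ‖(y - xQ) + (xQ - z₂)‖ := by rw [sub_add_sub_cancel]
      _ ≤ ‖y - xQ‖ + ‖xQ - z₂‖ := norm_add_le _ _
      _ = ‖y - xQ‖ + ‖z₂ - xQ‖ := by rw [norm_sub_rev xQ z₂]
      _ ≤ ℓ / 2 + ℓ := by rw [hz2n]; linarith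
      _ ≤ 3 * ℓ / 2 := by linarith
    have := (h1.trans (h3 z₂ h2))
    have habs : |b y| ≤ |cubeAvg d b z₂ (ℓ/2)| + Cb * 3 ^ μ := by
      have := abs_sub_abs_le_abs_sub (b y) (cubeAvg d b z₂ (ℓ/2))
      linarith
    calc |b y| ≤ |cubeAvg d b z₂ (ℓ/2)| + Cb * 3 ^ μ := habs
    _ ≤ _ := by gcongr; exact le_max_right _ _
  · have h1 := hBMOd xQ (ℓ/2) y (by positivity) hc
    have h2 : ‖y - xQ‖ ≤ 3 * ℓ / 2 := by linarith
    have := (h1.trans (h3 xQ h2))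
    have habs : |b y| ≤ |cubeAvg d b xQ (ℓ/2)| + Cb * 3 ^ μ := by
      have := abs_sub_abs_le_abs_sub (b y) (cubeAvg d b xQ (ℓ/2))
      linarith
    calc |b y| ≤ |cubeAvg d b xQ (ℓ/2)| + Cb * 3 ^ μ := habs
    _ ≤ _ := by gcongr; exact le_max_left _ _

lemma hlmax_lb (d : ℕ) (xQ : Fin d → ℝ) (ℓ : ℝ) (hℓ : 0 < ℓ)
    (x : Fin d → ℝ) (hlR : ℓ < ‖x - xQ‖) :
    ENNReal.ofReal (ℓ ^ (d : ℝ) / (4 * ‖x - xQ‖) ^ (d : ℝ)) ≤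
      HLMax d ((cube d xQ ℓ).indicator 1) x := by
  set R := ‖x - xQ‖ with hR
  have hR0 : (0 : ℝ) < R := lt_trans hℓ hlR
  have hsub : cube d xQ ℓ ⊆ Metric.ball x (2 * R) := by
    intro y hy
    have hy' : ‖y - xQ‖ ≤ ℓ / 2 := hy
    rw [Metric.mem_ball, dist_eq_norm]
    calc ‖y - x‖ = ‖(y - xQ) + (xQ - x)‖ := by rw [sub_add_sub_cancel]
    _ ≤ ‖y - xQ‖ + ‖xQ - x‖ := norm_add_le _ _
    _ = ‖y - xQ‖ + R := by rw [norm_sub_rev xQ x]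
    _ < 2 * R := by linarith
  have hball : volume (Metric.ball x (2 * R)) = ENNReal.ofReal ((4 * R) ^ (d : ℝ)) := by
    rw [Real.volume_pi_ball x (by positivity), Fintype.card_fin]
    congr 1
    rw [show 2 * (2 * R) = 4 * R by ring, Real.rpow_natCast]
  have hind : (fun y => ENNReal.ofReal |(cube d xQ ℓ).indicator (1 : (Fin d → ℝ) → ℝ) y|)
      = (cube d xQ ℓ).indicator (fun _ => (1 : ℝ≥0∞)) := by
    funext y
    by_cases hy : y ∈ cube d xQ ℓ <;>
      simp [Set.indicator_of_mem, Set.indicator_of_notMem, hy]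
  have hlint : ∫⁻ y in Metric.ball x (2 * R),
      ENNReal.ofReal |(cube d xQ ℓ).indicator (1 : (Fin d → ℝ) → ℝ) y|
      = volume (cube d xQ ℓ) := by
    rw [hind, lintegral_indicator (measurableSet_cube d xQ ℓ), lintegral_one,
      Measure.restrict_restrict (measurableSet_cube d xQ ℓ), Measure.restrict_apply_univ,
      Set.inter_eq_left.mpr hsub]
  have hterm : (volume (Metric.ball x (2 * R)))⁻¹ *
      ∫⁻ y in Metric.ball x (2 * R),
        ENNReal.ofReal |(cube d xQ ℓ).indicator (1 : (Fin d → ℝ) → ℝ) y|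
      = ENNReal.ofReal (ℓ ^ (d : ℝ) / (4 * R) ^ (d : ℝ)) := by
    rw [hlint, hball, volume_cube d xQ hℓ.le,
      ENNReal.ofReal_div_of_pos (by positivity), div_eq_mul_inv, mul_comm]
  calc ENNReal.ofReal (ℓ ^ (d : ℝ) / (4 * R) ^ (d : ℝ))
      = (volume (Metric.ball x (2 * R)))⁻¹ *
        ∫⁻ y in Metric.ball x (2 * R),
          ENNReal.ofReal |(cube d xQ ℓ).indicator (1 : (Fin d → ℝ) → ℝ) y| := hterm.symm
  _ ≤ HLMax d ((cube d xQ ℓ).indicator 1) x := by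
      apply le_iSup₂ (f := fun r (_ : r > (0:ℝ)) => (volume (Metric.ball x r))⁻¹ *
        ∫⁻ y in Metric.ball x r,
          ENNReal.ofReal |(cube d xQ ℓ).indicator (1 : (Fin d → ℝ) → ℝ) y|)
        (2 * R) (by positivity)


set_option maxHeartbeats 1000000 in
/-- Commutator kernel estimate: with `T` a `δ`-Calderón–Zygmund operator with kernel
`K`, `b ∈ BMO^d` with exponent `μ_b` and BMO bound `M`, and `(a, Q)` an atom with
`∫ a = 0`, `‖a‖_∞ ≤ |Q|^{−1/α}`, for `x ∉ 2√d Q` (where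
`[b,T](a)(x) = ∫ (K(x,y) − K(x,x_Q))(b(x) − b(y)) a(y) dy`):
`|[b,T](a)(x)| ≤ C ((𝔐χ_Q(x))^{(d+δ−μ_b)/d} + M (𝔐χ_Q(x))^{(d+δ)/d}) / ‖χ_Q‖_{L^α}`. -/
theorem stmt16 (d : ℕ) (hd : 0 < d) (δ α : ℝ) (hδ : 0 < δ) (hα : 0 < α)
    (b : (Fin d → ℝ) → ℝ) (hbmeas : Measurable b)
    (μ : ℝ) (hμ0 : 0 < μ) (hμd : μ < d) (Cb : ℝ) (hCb : 0 < Cb)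
    (hBMOd : ∀ (xQ : Fin d → ℝ) (ℓ : ℝ) (x : Fin d → ℝ), 0 < ℓ → x ∉ cube d xQ ℓ →
      |b x - cubeAvg d b xQ ℓ| ≤ Cb * (ℓ⁻¹ * ‖x - xQ‖) ^ μ)
    (M : ℝ) (hM : 0 ≤ M)
    (hBMO : ∀ (xQ : Fin d → ℝ) (ℓ : ℝ), 0 < ℓ →
      ⨍ y in cube d xQ ℓ, |b y - cubeAvg d b xQ ℓ| ≤ M) :
    ∃ C : ℝ≥0∞, 0 < C ∧ C < ⊤ ∧
      ∀ (K : (Fin d → ℝ) → (Fin d → ℝ) → ℝ) (A : ℝ), 0 < A →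
        (∀ x y z, y ≠ x → 2 * ‖y - z‖ ≤ ‖x - y‖ →
          |K x y - K x z| ≤ A * ‖y - z‖ ^ δ / ‖x - y‖ ^ ((d : ℝ) + δ)) →
        ∀ (a : (Fin d → ℝ) → ℝ) (xQ : Fin d → ℝ) (ℓ : ℝ), 0 < ℓ →
          Measurable a → (∀ y, y ∉ cube d xQ ℓ → a y = 0) →
          (∀ y, |a y| ≤ (ℓ ^ (d : ℝ)) ^ (-(1 / α))) →
          (∫ y, a y) = 0 →
          ∀ x, x ∉ cube d xQ (2 * Real.sqrt d * ℓ) →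
            Integrable (fun y => (K x y - K x xQ) * (b x - b y) * a y) →
            ENNReal.ofReal (A⁻¹ * |∫ y, (K x y - K x xQ) * (b x - b y) * a y|)
              ≤ C * ((HLMax d ((cube d xQ ℓ).indicator 1) x)
                      ^ (((d : ℝ) + δ - μ) / d)
                    + ENNReal.ofReal M *
                      (HLMax d ((cube d xQ ℓ).indicator 1) x) ^ (((d : ℝ) + δ) / d))
                / ENNReal.ofReal ((ℓ ^ (d : ℝ)) ^ (1 / α)) := by
  have h1d : (1 : ℝ) ≤ Real.sqrt d := by
    rw [show (1:ℝ) = Real.sqrt 1 by simp]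
    exact Real.sqrt_le_sqrt (by exact_mod_cast hd)
  have hdR : (0 : ℝ) < (d : ℝ) := by exact_mod_cast hd
  refine ⟨ENNReal.ofReal (2 * 3 ^ ((d:ℝ) + δ)) * ENNReal.ofReal (4 ^ ((d:ℝ) + δ)) *
    ENNReal.ofReal (max Cb 1), ?_, ?_, ?_⟩
  · apply ENNReal.mul_pos
    · apply (ENNReal.mul_pos (by simp [ENNReal.ofReal_pos]; positivity)
        (by simp [ENNReal.ofReal_pos]; positivity)).ne'
    · exact (ENNReal.ofReal_pos.mpr (by positivity)).ne'
  · exact ENNReal.mul_lt_top (ENNReal.mul_lt_top ENNReal.ofReal_lt_top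
      ENNReal.ofReal_lt_top) ENNReal.ofReal_lt_top
  intro K A hA hK a xQ ℓ hℓ hameas hasupp habd haint x hx hint
  rw [mem_cube, not_le] at hx
  have hR : Real.sqrt d * ℓ < ‖x - xQ‖ := by
    calc Real.sqrt d * ℓ = 2 * Real.sqrt d * ℓ / 2 := by ring
    _ < ‖x - xQ‖ := hx
  set R := ‖x - xQ‖ with hRdef
  have hlR : ℓ < R := lt_of_le_of_lt (by nlinarith) hR
  have hR0 : (0 : ℝ) < R := lt_trans hℓ hlR
  have hxout : x ∉ cube d xQ ℓ := by rw [mem_cube, not_le]; linarith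
  set Q := cube d xQ ℓ with hQdef
  set bQ := cubeAvg d b xQ ℓ with hbQdef
  set c := Cb * (ℓ⁻¹ * R) ^ μ with hcdef
  have hbx : |b x - bQ| ≤ c := hBMOd xQ ℓ x hℓ hxout
  have hc0 : 0 ≤ c := by positivity
  set C₁ : ℝ := 2 * 3 ^ ((d:ℝ) + δ) with hC1def
  have hC10 : 0 < C₁ := by positivity
  set Kb := C₁ * A * ℓ ^ δ / R ^ ((d:ℝ) + δ) with hKbdef
  have hKb0 : 0 ≤ Kb := by positivity
  set P := ℓ ^ (d:ℝ) with hPdef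
  have hP0 : 0 < P := by positivity
  set pa := P ^ (-(1/α)) with hpadef
  have hpa0 : 0 < pa := by positivity
  obtain ⟨B, hB⟩ := b_bounded d hd b μ hμ0 Cb hCb hBMOd xQ ℓ hℓ
  have hQmeas : MeasurableSet Q := measurableSet_cube d xQ ℓ
  have hQvol : volume Q = ENNReal.ofReal P := volume_cube d xQ hℓ.le
  have hQfin : volume Q < ⊤ := by rw [hQvol]; exact ENNReal.ofReal_lt_top
  -- integrability of |b - bQ| on Q
  have hbint : IntegrableOn (fun y => |b y - bQ|) Q volume := by
    apply Integrable.mono' (g := fun _ => B + |bQ|)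
      (integrableOn_const hQfin.ne)
      ((hbmeas.sub measurable_const).abs).aestronglyMeasurable
    filter_upwards [ae_restrict_mem hQmeas] with y hy
    have h1 := hB y hy
    have : |b y - bQ| ≤ |b y| + |bQ| := abs_sub _ _
    rw [Real.norm_eq_abs, abs_abs]
    exact (show |b y - bQ| ≤ B + |bQ| by linarith)
  set G : (Fin d → ℝ) → ℝ := fun y => Kb * pa * (c + |b y - bQ|) with hGdef
  have hGint : IntegrableOn G Q volume := by
    exact ((integrableOn_const hQfin.ne).add hbint).const_mul (Kb * pa)
  set f : (Fin d → ℝ) → ℝ := fun y => (K x y - K x xQ) * (b x - b y) * a y with hfdef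
  have hpt : ∀ y, |f y| ≤ Q.indicator G y := by
    intro y
    by_cases hy : y ∈ Q
    · rw [Set.indicator_of_mem hy]
      have hker := kernel_bound d hd δ hδ K A hA hK xQ ℓ hℓ x
        (by rw [mem_cube, not_le]; exact hx) y hy
      have hbb : |b x - b y| ≤ c + |b y - bQ| := by
        have : |b x - b y| ≤ |b x - bQ| + |b y - bQ| := by
          have := abs_sub_le (b x) bQ (b y)
          rw [abs_sub_comm bQ (b y)] at this
          linarith
        linarith
      calc |f y| = |K x y - K x xQ| * |b x - b y| * |a y| := by
            rw [hfdef]; rw [abs_mul, abs_mul]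
      _ ≤ Kb * (c + |b y - bQ|) * pa := by
            exact mul_le_mul (mul_le_mul hker hbb (abs_nonneg _) hKb0)
              (habd y) (abs_nonneg _)
              (mul_nonneg hKb0 (add_nonneg hc0 (abs_nonneg _)))
      _ = G y := by rw [hGdef]; ring
    · rw [Set.indicator_of_notMem hy]
      have : a y = 0 := hasupp y hy
      simp [hfdef, this]
  have hIa : |∫ y, f y| ≤ ∫ y, Q.indicator G y := by
    calc |∫ y, f y| = ‖∫ y, f y‖ := (Real.norm_eq_abs _).symm
    _ ≤ ∫ y, ‖f y‖ := norm_integral_le_integral_norm f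
    _ ≤ ∫ y, Q.indicator G y := by
        apply integral_mono hint.norm (hGint.integrable_indicator hQmeas)
        intro y
        simpa using hpt y
  have hIb : ∫ y, Q.indicator G y = ∫ y in Q, G y := integral_indicator hQmeas
  have hIc : ∫ y in Q, G y = Kb * pa * (c * P + ∫ y in Q, |b y - bQ|) := by
    rw [hGdef]
    rw [MeasureTheory.integral_const_mul]
    congr 1
    rw [integral_add (integrableOn_const (C := c) hQfin.ne) hbint]
    congr 1
    rw [setIntegral_const, measureReal_def, hQvol, ENNReal.toReal_ofReal hP0.le, smul_eq_mul, mul_comm]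
  have hbavg : ∫ y in Q, |b y - bQ| ≤ M * P := by
    have h := hBMO xQ ℓ hℓ
    rw [show ⨍ y in cube d xQ ℓ, |b y - cubeAvg d b xQ ℓ| = ⨍ y in Q, |b y - bQ| from rfl,
      setAverage_eq, measureReal_def, hQvol, ENNReal.toReal_ofReal hP0.le, smul_eq_mul,
      inv_mul_le_iff₀ hP0] at h
    linarith [h]
  have hIfull : |∫ y, f y| ≤ Kb * pa * (c * P + M * P) := by
    calc |∫ y, f y| ≤ ∫ y in Q, G y := by rw [← hIb]; exact hIa
    _ = Kb * pa * (c * P + ∫ y in Q, |b y - bQ|) := hIc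
    _ ≤ Kb * pa * (c * P + M * P) := by gcongr
  -- real-side final bound
  have key2 : (ℓ/R) ^ ((d:ℝ) + δ) = ℓ ^ δ * P / R ^ ((d:ℝ) + δ) := by
    rw [Real.div_rpow hℓ.le hR0.le, Real.rpow_add hℓ, hPdef]
    ring
  have key1 : (ℓ/R) ^ ((d:ℝ) + δ - μ) = (ℓ⁻¹ * R) ^ μ * (ℓ ^ δ * P / R ^ ((d:ℝ) + δ)) := by
    rw [show (d:ℝ) + δ - μ = ((d:ℝ) + δ) + (-μ) by ring,
      Real.rpow_add (by positivity), Real.rpow_neg (by positivity), key2,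
      show ℓ⁻¹ * R = (ℓ/R)⁻¹ by field_simp, Real.inv_rpow (by positivity)]
    ring
  have hreal : A⁻¹ * |∫ y, f y| ≤
      C₁ * pa * (Cb * (ℓ/R) ^ ((d:ℝ) + δ - μ) + M * (ℓ/R) ^ ((d:ℝ) + δ)) := by
    have h1 : A⁻¹ * |∫ y, f y| ≤ A⁻¹ * (Kb * pa * (c * P + M * P)) :=
      mul_le_mul_of_nonneg_left hIfull (by positivity)
    refine h1.trans (le_of_eq ?_)
    rw [key1, key2, hKbdef, hcdef, hC1def]
    field_simp
  -- ENNReal side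
  set m := HLMax d (Q.indicator 1) x with hmdef
  have hm : ENNReal.ofReal (ℓ ^ (d:ℝ) / (4*R) ^ (d:ℝ)) ≤ m := hlmax_lb d xQ ℓ hℓ x hlR
  have hpow : ∀ e : ℝ, 0 < e → e ≤ (d:ℝ) + δ →
      ENNReal.ofReal ((ℓ/R) ^ e) ≤ ENNReal.ofReal (4 ^ ((d:ℝ) + δ)) * m ^ (e/(d:ℝ)) := by
    intro e he hed
    have hu : (0:ℝ) < ℓ/(4*R) := by positivity
    have h41 : ℓ/R = 4 * (ℓ/(4*R)) := by field_simp
    calc ENNReal.ofReal ((ℓ/R) ^ e) = ENNReal.ofReal (4 ^ e * (ℓ/(4*R)) ^ e) := by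
          rw [h41, Real.mul_rpow (by norm_num) hu.le]
    _ ≤ ENNReal.ofReal (4 ^ ((d:ℝ) + δ) * (ℓ/(4*R)) ^ e) := by
          apply ENNReal.ofReal_le_ofReal
          have h4 : (4:ℝ) ^ e ≤ 4 ^ ((d:ℝ) + δ) :=
            Real.rpow_le_rpow_of_exponent_le (by norm_num) hed
          have := Real.rpow_nonneg hu.le e
          nlinarith
    _ = ENNReal.ofReal (4 ^ ((d:ℝ) + δ)) * ENNReal.ofReal ((ℓ/(4*R)) ^ e) :=
          ENNReal.ofReal_mul (by positivity)
    _ ≤ ENNReal.ofReal (4 ^ ((d:ℝ) + δ)) * m ^ (e/(d:ℝ)) := by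
          gcongr
          have h1 : (ℓ/(4*R)) ^ e = ((ℓ/(4*R)) ^ ((d:ℝ))) ^ (e/(d:ℝ)) := by
            rw [← Real.rpow_mul hu.le]
            congr 1
            field_simp
          rw [h1, ← ENNReal.ofReal_rpow_of_pos (by positivity)]
          apply ENNReal.rpow_le_rpow _ (by positivity)
          rw [Real.div_rpow hℓ.le (by positivity)]
          exact hm
  have hp1 := hpow ((d:ℝ) + δ - μ) (by linarith) (by linarith)
  have hp2 := hpow ((d:ℝ) + δ) (by positivity) (by linarith)
  have hmax1 : ENNReal.ofReal Cb ≤ ENNReal.ofReal (max Cb 1) :=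
    ENNReal.ofReal_le_ofReal (le_max_left _ _)
  have hmax2 : (1 : ℝ≥0∞) ≤ ENNReal.ofReal (max Cb 1) := by
    rw [ENNReal.one_le_ofReal]; exact le_max_right _ _
  have hZ : ENNReal.ofReal pa = (ENNReal.ofReal (P ^ (1/α)))⁻¹ := by
    rw [hpadef, Real.rpow_neg hP0.le, ENNReal.ofReal_inv_of_pos (by positivity)]
  calc ENNReal.ofReal (A⁻¹ * |∫ y, f y|)
      ≤ ENNReal.ofReal (C₁ * pa * (Cb * (ℓ/R) ^ ((d:ℝ) + δ - μ) + M * (ℓ/R) ^ ((d:ℝ) + δ))) :=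
        ENNReal.ofReal_le_ofReal hreal
  _ = ENNReal.ofReal C₁ * ENNReal.ofReal pa *
      (ENNReal.ofReal Cb * ENNReal.ofReal ((ℓ/R) ^ ((d:ℝ) + δ - μ)) +
       ENNReal.ofReal M * ENNReal.ofReal ((ℓ/R) ^ ((d:ℝ) + δ))) := by
        rw [ENNReal.ofReal_mul (by positivity), ENNReal.ofReal_mul (by positivity),
          ENNReal.ofReal_add (by positivity) (by positivity),
          ENNReal.ofReal_mul hCb.le, ENNReal.ofReal_mul hM]
  _ ≤ ENNReal.ofReal C₁ * ENNReal.ofReal pa *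
      (ENNReal.ofReal Cb * (ENNReal.ofReal (4 ^ ((d:ℝ) + δ)) * m ^ (((d:ℝ) + δ - μ)/(d:ℝ))) +
       ENNReal.ofReal M * (ENNReal.ofReal (4 ^ ((d:ℝ) + δ)) * m ^ (((d:ℝ) + δ)/(d:ℝ)))) := by
        gcongr
  _ = ENNReal.ofReal C₁ * ENNReal.ofReal (4 ^ ((d:ℝ) + δ)) * ENNReal.ofReal pa *
      (ENNReal.ofReal Cb * m ^ (((d:ℝ) + δ - μ)/(d:ℝ)) +
       ENNReal.ofReal M * m ^ (((d:ℝ) + δ)/(d:ℝ))) := by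
        ring
  _ ≤ ENNReal.ofReal C₁ * ENNReal.ofReal (4 ^ ((d:ℝ) + δ)) * ENNReal.ofReal pa *
      (ENNReal.ofReal (max Cb 1) *
        (m ^ (((d:ℝ) + δ - μ)/(d:ℝ)) + ENNReal.ofReal M * m ^ (((d:ℝ) + δ)/(d:ℝ)))) := by
        apply mul_le_mul_right
        rw [mul_add]
        exact add_le_add (mul_le_mul' hmax1 le_rfl)
          (le_mul_of_one_le_left zero_le hmax2)
  _ = ENNReal.ofReal C₁ * ENNReal.ofReal (4 ^ ((d:ℝ) + δ)) * ENNReal.ofReal (max Cb 1) *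
      (m ^ (((d:ℝ) + δ - μ)/(d:ℝ)) + ENNReal.ofReal M * m ^ (((d:ℝ) + δ)/(d:ℝ))) /
      ENNReal.ofReal (P ^ (1/α)) := by
        rw [hZ, ENNReal.div_eq_inv_mul]
        ring
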